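/- Let α ∈ (0,1), let X be a finite nonempty set, and let e⁰, e¹, …, e^M : X → ℝ. Fix m ∈ {1,…,M} and let x* ∈ X be a point where the function x ↦ |e^m(x)| attains its maximum over X. Then sgn(e^m(x*)) · (δ_t^α e^m)(x*) ≥ δ_t^α ν^m, where (δ_t^α e^m)(x*) denotes the L1 operator applied to the real sequence (e^j(x*))_{j=0}^M, (ν^j) is the real sequence ν^j := max_{x∈X} |e^j(x)|, and sgn is the sign function (with sgn(0) = 0). -/

import Mathlib

open Real MeasureTheory

/-- The L1 discrete Caputo operator of order `α` on the temporal mesh `t`. -/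
noncomputable def deltaL1 (α : ℝ) (t : ℕ → ℝ) (V : ℕ → ℝ) (m : ℕ) : ℝ :=
  (1 / Real.Gamma (1 - α)) *
    ∑ j ∈ Finset.Icc 1 m,
      ((V j - V (j - 1)) / (t j - t (j - 1))) *
        ∫ s in (t (j - 1))..(t j), (t m - s) ^ (-α)

private lemma abel_id (K g : ℕ → ℝ) : ∀ n : ℕ,
    ∑ i ∈ Finset.range (n + 1), K (i + 1) * (g (i + 1) - g i)
      = K (n + 1) * g (n + 1) - K 1 * g 0
        + ∑ i ∈ Finset.range n, (K (i + 1) - K (i + 2)) * g (i + 1) := by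
  intro n
  induction n with
  | zero => simp; ring
  | succ n ih =>
    rw [Finset.sum_range_succ, ih, Finset.sum_range_succ]
    ring

theorem stmt12
    (α T : ℝ) (hα : α ∈ Set.Ioo (0 : ℝ) 1) (hT : 0 < T)
    (M : ℕ) (hM : 1 ≤ M) (t : ℕ → ℝ)
    (ht0 : t 0 = 0) (htM : t M = T)
    (hmono : ∀ j, j < M → t j < t (j + 1))
    (X : Type*) [Fintype X] [Nonempty X]
    (e : ℕ → X → ℝ)
    (m : ℕ) (hm1 : 1 ≤ m) (hmM : m ≤ M)
    (xstar : X) (hmax : ∀ x, |e m x| ≤ |e m xstar|) :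
    Real.sign (e m xstar) * deltaL1 α t (fun j => e j xstar) m ≥
      deltaL1 α t (fun j => ⨆ x : X, |e j x|) m := by
  obtain ⟨hα0, hα1⟩ := hα
  have hβ0 : (0:ℝ) < 1 - α := by linarith
  have hβ1 : (1:ℝ) - α < 1 := by linarith
  -- strict monotonicity of the mesh up to M
  have hts : ∀ i j : ℕ, i < j → j ≤ M → t i < t j := by
    intro i j
    induction j with
    | zero => omega
    | succ j ih =>
      intro hij hjM
      rcases Nat.lt_succ_iff_lt_or_eq.mp hij with h | rfl
      · exact lt_trans (ih h (by omega)) (hmono j (by omega))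
      · exact hmono i (by omega)
  -- the sup sequence
  set ν : ℕ → ℝ := fun j => ⨆ x : X, |e j x| with hνdef
  set W : ℕ → ℝ := fun j => e j xstar with hWdef
  set s : ℝ := Real.sign (e m xstar) with hsdef
  have hbdd : ∀ j, BddAbove (Set.range fun x => |e j x|) :=
    fun j => (Set.finite_range _).bddAbove
  have hν_ge : ∀ j x, |e j x| ≤ ν j := fun j x => le_ciSup (hbdd j) x
  have hνm : ν m = |e m xstar| := le_antisymm (ciSup_le hmax) (hν_ge m xstar)
  have hs_abs : |s| ≤ 1 := by
    rcases lt_trichotomy (e m xstar) 0 with h | h | h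
    · simp [hsdef, Real.sign_of_neg h]
    · simp [hsdef, h]
    · simp [hsdef, Real.sign_of_pos h]
  have hsW : s * W m = |W m| := by
    rcases lt_trichotomy (e m xstar) 0 with h | h | h
    · simp [hsdef, hWdef, Real.sign_of_neg h, abs_of_neg h]
    · simp [hsdef, hWdef, h]
    · simp [hsdef, hWdef, Real.sign_of_pos h, abs_of_pos h]
  set g : ℕ → ℝ := fun j => s * W j - ν j with hgdef
  have hg_nonpos : ∀ j, g j ≤ 0 := by
    intro j
    have h1 : s * W j ≤ |W j| := by
      calc s * W j ≤ |s * W j| := le_abs_self _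
        _ = |s| * |W j| := abs_mul _ _
        _ ≤ 1 * |W j| := by
            exact mul_le_mul_of_nonneg_right hs_abs (abs_nonneg _)
        _ = |W j| := one_mul _
    have h2 : |W j| ≤ ν j := hν_ge j xstar
    simp only [hgdef]; linarith
  have hgm : g m = 0 := by simp only [hgdef]; rw [hsW, hνm]; simp [hWdef]
  -- coefficients
  set K : ℕ → ℝ := fun j =>
    ((t m - t (j - 1)) ^ (1 - α) - (t m - t j) ^ (1 - α)) /
      ((1 - α) * (t j - t (j - 1))) with hKdef
  -- compute the integrals
  have hint : ∀ j : ℕ, 1 ≤ j → j ≤ m →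
      (∫ s in (t (j - 1))..(t j), (t m - s) ^ (-α))
        = ((t m - t (j - 1)) ^ (1 - α) - (t m - t j) ^ (1 - α)) / (1 - α) := by
    intro j hj1 hjm
    rw [intervalIntegral.integral_comp_sub_left (fun u => u ^ (-α)) (t m)]
    rw [integral_rpow (Or.inl (by linarith : (-1:ℝ) < -α))]
    rw [show -α + 1 = 1 - α by ring]
  -- rewrite deltaL1 as a plain sum
  have hdelta : ∀ V : ℕ → ℝ, deltaL1 α t V m =
      (1 / Real.Gamma (1 - α)) *
        ∑ i ∈ Finset.range m, (V (i + 1) - V i) * K (i + 1) := by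
    intro V
    unfold deltaL1
    congr 1
    rw [← Finset.Ico_add_one_right_eq_Icc, Finset.sum_Ico_eq_sum_range]
    norm_num
    apply Finset.sum_congr rfl
    intro i hi
    have hi' : i < m := Finset.mem_range.mp hi
    have h1 : (1 + i : ℕ) - 1 = i := by omega
    have h2 : (1 + i : ℕ) = i + 1 := by omega
    rw [h2]
    have hI := hint (i + 1) (by omega) (by omega)
    simp only [Nat.add_sub_cancel] at hI
    rw [hI]
    have hτ : t i < t (i + 1) := hts i (i + 1) (by omega) (by omega)
    have hτ' : t (i + 1) - t i ≠ 0 := by linarith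
    have hβ' : (1:ℝ) - α ≠ 0 := by linarith
    simp only [hKdef, Nat.add_sub_cancel]
    field_simp
  -- properties of K
  have hK1 : 0 ≤ K 1 := by
    have h1 : t m - t 1 ≤ t m - t 0 := by
      have := hts 0 1 (by omega) (by omega)
      linarith
    have h0 : 0 ≤ t m - t 1 := by
      rcases eq_or_lt_of_le hm1 with h | h
      · simp [← h]
      · have := hts 1 m h hmM; linarith
    have hnum : (t m - t 1) ^ (1 - α) ≤ (t m - t 0) ^ (1 - α) :=
      Real.rpow_le_rpow h0 h1 (by linarith)
    have hden : 0 < (1 - α) * (t 1 - t 0) :=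
      mul_pos hβ0 (by have := hts 0 1 (by omega) (by omega); linarith)
    have : K 1 = ((t m - t 0) ^ (1 - α) - (t m - t 1) ^ (1 - α)) / ((1 - α) * (t 1 - t 0)) := by
      simp [hKdef]
    rw [this]
    exact div_nonneg (by linarith) hden.le
  have hKmono : ∀ j : ℕ, 1 ≤ j → j + 1 ≤ m → K j ≤ K (j + 1) := by
    intro j hj1 hjm
    have haa : 0 ≤ t m - t (j + 1) := by
      rcases eq_or_lt_of_le hjm with h | h
      · simp [h]
      · have := hts (j + 1) m h hmM; linarith
    have hab : t m - t (j + 1) < t m - t j := by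
      have := hts j (j + 1) (by omega) (by omega)
      linarith
    have hbc : t m - t j < t m - t (j - 1) := by
      have := hts (j - 1) j (by omega) (by omega)
      linarith
    have hslope := (Real.concaveOn_rpow (by linarith : (0:ℝ) ≤ 1 - α)
        (by linarith : (1:ℝ) - α ≤ 1)).slope_anti_adjacent
      (x := t m - t (j + 1)) (y := t m - t j) (z := t m - t (j - 1))
      (Set.mem_Ici.mpr haa) (Set.mem_Ici.mpr (by linarith)) hab hbc
    have e1 : K j = (((t m - t (j - 1)) ^ (1 - α) - (t m - t j) ^ (1 - α)) /
        (t m - t (j - 1) - (t m - t j))) / (1 - α) := by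
      simp only [hKdef]
      rw [div_div,
        show (t m - t (j - 1) - (t m - t j)) * (1 - α) = (1 - α) * (t j - t (j - 1)) by ring]
    have e2 : K (j + 1) = (((t m - t j) ^ (1 - α) - (t m - t (j + 1)) ^ (1 - α)) /
        (t m - t j - (t m - t (j + 1)))) / (1 - α) := by
      simp only [hKdef, Nat.add_sub_cancel]
      rw [div_div,
        show (t m - t j - (t m - t (j + 1))) * (1 - α) = (1 - α) * (t (j + 1) - t j) by ring]
    rw [e1, e2]
    exact div_le_div_of_nonneg_right hslope hβ0.le
  -- assemble
  have hc : 0 ≤ 1 / Real.Gamma (1 - α) := by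
    have := Real.Gamma_pos_of_pos hβ0
    positivity
  rw [ge_iff_le, hdelta, hdelta]
  obtain ⟨n, rfl⟩ : ∃ n, m = n + 1 := ⟨m - 1, by omega⟩
  have hsum : ∑ i ∈ Finset.range (n + 1), K (i + 1) * (g (i + 1) - g i)
      = s * (∑ i ∈ Finset.range (n + 1), (W (i + 1) - W i) * K (i + 1))
        - ∑ i ∈ Finset.range (n + 1), (ν (i + 1) - ν i) * K (i + 1) := by
    rw [Finset.mul_sum, ← Finset.sum_sub_distrib]
    apply Finset.sum_congr rfl
    intro i _
    simp only [hgdef]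
    ring
  have hsum_nonneg : 0 ≤ ∑ i ∈ Finset.range (n + 1), K (i + 1) * (g (i + 1) - g i) := by
    rw [abel_id]
    have h1 : K (n + 1) * g (n + 1) = 0 := by rw [hgm, mul_zero]
    have h2 : K 1 * g 0 ≤ 0 := mul_nonpos_of_nonneg_of_nonpos hK1 (hg_nonpos 0)
    have h3 : 0 ≤ ∑ i ∈ Finset.range n, (K (i + 1) - K (i + 2)) * g (i + 1) := by
      apply Finset.sum_nonneg
      intro i hi
      have hi' : i < n := Finset.mem_range.mp hi
      have := hKmono (i + 1) (by omega) (by omega)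
      exact mul_nonneg_of_nonpos_of_nonpos (by linarith) (hg_nonpos (i + 1))
    linarith
  have hfin : ∑ i ∈ Finset.range (n + 1), (ν (i + 1) - ν i) * K (i + 1)
      ≤ s * ∑ i ∈ Finset.range (n + 1), (W (i + 1) - W i) * K (i + 1) := by
    rw [hsum] at hsum_nonneg
    linarith
  calc (1 / Real.Gamma (1 - α)) * ∑ i ∈ Finset.range (n + 1), (ν (i + 1) - ν i) * K (i + 1)
      ≤ (1 / Real.Gamma (1 - α)) * (s * ∑ i ∈ Finset.range (n + 1), (W (i + 1) - W i) * K (i + 1)) :=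
        mul_le_mul_of_nonneg_left hfin hc
    _ = s * ((1 / Real.Gamma (1 - α)) * ∑ i ∈ Finset.range (n + 1), (W (i + 1) - W i) * K (i + 1)) := by ring
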